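/- Let n ≥ 1, let Σ be a symmetric positive definite n×n real matrix, let P̂ be a Borel probability measure on ℝⁿ with ∫‖ξ‖ dP̂(ξ) < ∞, let θ ≥ 0, and let c ∈ ℝⁿ with c ≠ 0. Define P* as the pushforward of P̂ under the shift map T(ξ) = ξ + θ·Σc/√(cᵀΣc). Then: (i) the coupling given by the pushforward of P̂ under ξ ↦ (ξ, T(ξ)) has marginals P̂ and P* and satisfies ∫‖ξ₁−ξ₂‖_Σ dQ = θ, so d_W(P*, P̂) ≤ θ; and (ii) E_{P*}[cᵀξ] = E_{P̂}[cᵀξ] + θ·√(cᵀΣc). -/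

import Mathlib

open Matrix MeasureTheory

/-- The Mahalanobis norm associated with a positive definite matrix `S`:
`‖x‖_S = √(xᵀ S⁻¹ x)`. -/
noncomputable def mahal {n : ℕ} (S : Matrix (Fin n) (Fin n) ℝ) (x : Fin n → ℝ) : ℝ :=
  Real.sqrt (x ⬝ᵥ (S⁻¹ *ᵥ x))

/-- Type-1 Wasserstein distance with Mahalanobis ground cost, defined as the infimum of
transport costs over couplings. -/
noncomputable def wassersteinDist {n : ℕ} (S : Matrix (Fin n) (Fin n) ℝ)
    (P1 P2 : Measure (Fin n → ℝ)) : ℝ :=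
  sInf {r : ℝ | ∃ Q : Measure ((Fin n → ℝ) × (Fin n → ℝ)),
    IsProbabilityMeasure Q ∧ Q.map Prod.fst = P1 ∧ Q.map Prod.snd = P2 ∧
    r = ∫ q, mahal S (q.1 - q.2) ∂Q}

/-- The shifted distribution `P* = P̂ ∘ T⁻¹` with `T(ξ) = ξ + θ·Σc/√(cᵀΣc)`
is within Wasserstein distance `θ` of `P̂` (the graph coupling has marginals `P̂`, `P*` and
cost exactly `θ`), and `E_{P*}[cᵀξ] = E_{P̂}[cᵀξ] + θ·√(cᵀΣc)`. -/
theorem stmt_2 (n : ℕ) (hn : 1 ≤ n) (S : Matrix (Fin n) (Fin n) ℝ)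
    (hsymm : S.IsSymm) (hpd : S.PosDef)
    (Phat : Measure (Fin n → ℝ)) [IsProbabilityMeasure Phat]
    (hmom : Integrable (fun ξ => ‖ξ‖) Phat)
    (θ : ℝ) (hθ : 0 ≤ θ) (c : Fin n → ℝ) (hc : c ≠ 0)
    (T : (Fin n → ℝ) → (Fin n → ℝ))
    (hT : ∀ ξ, T ξ = ξ + (θ / Real.sqrt (c ⬝ᵥ (S *ᵥ c))) • (S *ᵥ c))
    (Pstar : Measure (Fin n → ℝ)) (hPstar : Pstar = Phat.map T)
    (Q : Measure ((Fin n → ℝ) × (Fin n → ℝ)))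
    (hQ : Q = Phat.map (fun ξ => (ξ, T ξ))) :
    Q.map Prod.fst = Phat ∧
    Q.map Prod.snd = Pstar ∧
    (∫ q, mahal S (q.1 - q.2) ∂Q) = θ ∧
    wassersteinDist S Pstar Phat ≤ θ ∧
    (∫ ξ, c ⬝ᵥ ξ ∂Pstar) = (∫ ξ, c ⬝ᵥ ξ ∂Phat) + θ * Real.sqrt (c ⬝ᵥ (S *ᵥ c)) := by
  set v : ℝ := c ⬝ᵥ (S *ᵥ c) with hv_def
  have hv : 0 < v := by simpa using hpd.dotProduct_mulVec_pos hc
  have hsv : 0 < Real.sqrt v := Real.sqrt_pos.2 hv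
  set a : ℝ := θ / Real.sqrt v with ha_def
  have ha : 0 ≤ a := div_nonneg hθ hsv.le
  set w : Fin n → ℝ := S *ᵥ c with hw_def
  have hinv : S⁻¹ *ᵥ w = c := by
    rw [hw_def, Matrix.mulVec_mulVec,
      Matrix.nonsing_inv_mul S (isUnit_iff_ne_zero.2 (ne_of_gt hpd.det_pos)),
      Matrix.one_mulVec]
  have hwv : w ⬝ᵥ (S⁻¹ *ᵥ w) = v := by rw [hinv, dotProduct_comm]
  have hmahal : ∀ b : ℝ, mahal S (b • w) = |b| * Real.sqrt v := by
    intro b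
    have h1 : (b • w) ⬝ᵥ (S⁻¹ *ᵥ (b • w)) = b ^ 2 * v := by
      rw [Matrix.mulVec_smul, smul_dotProduct, dotProduct_smul, hwv, smul_eq_mul, smul_eq_mul]
      ring
    rw [mahal, h1, Real.sqrt_mul (sq_nonneg b), Real.sqrt_sq_eq_abs]
  have hav : a * Real.sqrt v = θ := div_mul_cancel₀ θ (ne_of_gt hsv)
  -- continuity of the Mahalanobis norm
  have hmc : Continuous (fun x : Fin n → ℝ => mahal S x) := by
    unfold mahal
    apply Real.continuous_sqrt.comp
    simp only [dotProduct, Matrix.mulVec]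
    exact continuous_finset_sum _ fun i _ => (continuous_apply i).mul
      (continuous_finset_sum _ fun j _ => continuous_const.mul (continuous_apply j))
  have hcostc : Continuous (fun q : (Fin n → ℝ) × (Fin n → ℝ) => mahal S (q.1 - q.2)) :=
    hmc.comp (continuous_fst.sub continuous_snd)
  -- measurability of T
  have hTmeas : Measurable T := by
    have hTe : T = fun ξ => ξ + a • w := funext hT
    rw [hTe]; exact measurable_id.add_const _
  have hGmeas : Measurable fun ξ => (ξ, T ξ) := measurable_id.prodMk hTmeas
  have hfst : Q.map Prod.fst = Phat := by
    rw [hQ, Measure.map_map measurable_fst hGmeas]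
    have h : (Prod.fst ∘ fun ξ => (ξ, T ξ)) = id := rfl
    rw [h, Measure.map_id]
  have hsnd : Q.map Prod.snd = Pstar := by
    rw [hQ, Measure.map_map measurable_snd hGmeas, hPstar]
    rfl
  have hconst1 : ∀ ξ : Fin n → ℝ, mahal S (ξ - T ξ) = θ := by
    intro ξ
    have h2 : ξ - T ξ = (-a) • w := by
      rw [hT ξ, neg_smul]
      abel
    rw [h2, hmahal, abs_neg, abs_of_nonneg ha, hav]
  have hconst2 : ∀ ξ : Fin n → ℝ, mahal S (T ξ - ξ) = θ := by
    intro ξ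
    have h2 : T ξ - ξ = a • w := by
      rw [hT ξ]
      abel
    rw [h2, hmahal, abs_of_nonneg ha, hav]
  have hcost : (∫ q, mahal S (q.1 - q.2) ∂Q) = θ := by
    rw [hQ, integral_map hGmeas.aemeasurable hcostc.aestronglyMeasurable]
    have h : (fun ξ => mahal S ((ξ, T ξ).1 - (ξ, T ξ).2)) = fun _ : Fin n → ℝ => θ :=
      funext fun ξ => hconst1 ξ
    rw [h, integral_const]
    simp
  refine ⟨hfst, hsnd, hcost, ?_, ?_⟩
  · -- Wasserstein bound via the swapped coupling
    have hG'meas : Measurable fun ξ : Fin n → ℝ => (T ξ, ξ) := hTmeas.prodMk measurable_id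
    have hmem : θ ∈ {r : ℝ | ∃ Q : Measure ((Fin n → ℝ) × (Fin n → ℝ)),
        IsProbabilityMeasure Q ∧ Q.map Prod.fst = Pstar ∧ Q.map Prod.snd = Phat ∧
        r = ∫ q, mahal S (q.1 - q.2) ∂Q} := by
      refine ⟨Phat.map (fun ξ => (T ξ, ξ)),
        Measure.isProbabilityMeasure_map hG'meas.aemeasurable, ?_, ?_, ?_⟩
      · rw [Measure.map_map measurable_fst hG'meas, hPstar]; rfl
      · rw [Measure.map_map measurable_snd hG'meas]
        have h : (Prod.snd ∘ fun ξ : Fin n → ℝ => (T ξ, ξ)) = id := rfl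
        rw [h, Measure.map_id]
      · rw [integral_map hG'meas.aemeasurable hcostc.aestronglyMeasurable]
        have h : (fun ξ => mahal S ((T ξ, ξ).1 - (T ξ, ξ).2)) = fun _ : Fin n → ℝ => θ :=
          funext fun ξ => hconst2 ξ
        rw [h, integral_const]
        simp
    have hbdd : BddBelow {r : ℝ | ∃ Q : Measure ((Fin n → ℝ) × (Fin n → ℝ)),
        IsProbabilityMeasure Q ∧ Q.map Prod.fst = Pstar ∧ Q.map Prod.snd = Phat ∧
        r = ∫ q, mahal S (q.1 - q.2) ∂Q} := by
      refine ⟨0, fun r hr => ?_⟩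
      obtain ⟨Q'', _, _, _, hr⟩ := hr
      rw [hr]
      exact integral_nonneg fun q => Real.sqrt_nonneg _
    exact csInf_le hbdd hmem
  · -- expectation shift
    have hcont : Continuous fun ξ : Fin n → ℝ => c ⬝ᵥ ξ := by
      simp only [dotProduct]
      exact continuous_finset_sum _ fun i _ => continuous_const.mul (continuous_apply i)
    have hint : Integrable (fun ξ => c ⬝ᵥ ξ) Phat := by
      refine Integrable.mono' (hmom.const_mul (∑ i, |c i|)) hcont.aestronglyMeasurable ?_
      filter_upwards with ξ
      calc ‖c ⬝ᵥ ξ‖ ≤ ∑ i, ‖c i * ξ i‖ := norm_sum_le _ _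
        _ ≤ ∑ i, |c i| * ‖ξ‖ := by
            refine Finset.sum_le_sum fun i _ => ?_
            rw [norm_mul]
            exact mul_le_mul_of_nonneg_left (norm_le_pi_norm ξ i) (abs_nonneg _)
        _ = (∑ i, |c i|) * ‖ξ‖ := by rw [Finset.sum_mul]
    have hvav : a * v = θ * Real.sqrt v := by
      conv_lhs => rw [← Real.mul_self_sqrt hv.le]
      rw [← mul_assoc, hav]
    have hcwv : c ⬝ᵥ w = v := by rw [← hinv, dotProduct_comm]; exact hwv
    have heq : ∀ ξ, c ⬝ᵥ T ξ = c ⬝ᵥ ξ + θ * Real.sqrt v := by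
      intro ξ
      rw [hT ξ, dotProduct_add, dotProduct_smul, smul_eq_mul, hcwv, hvav]
    rw [hPstar, integral_map hTmeas.aemeasurable hcont.aestronglyMeasurable]
    simp only [heq]
    rw [integral_add hint (integrable_const _), integral_const]
    simp
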